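/- Every rapid P-point is a Laver ultrafilter. -/

import Mathlib

/-- A partition of a set `S` into finitely many (nonempty, pairwise disjoint) pieces
covering everything. -/
def IsFinPartition {S : Type*} (P : Set (Set S)) : Prop :=
  P.Finite ∧ ∅ ∉ P ∧ ⋃₀ P = Set.univ ∧ P.Pairwise Disjoint

/-- A Laver ultrafilter. -/
def IsLaverUltrafilter {S : Type*} (U : Ultrafilter S) : Prop :=
  Filter.cofinite ≤ (U : Filter S) ∧
  ∀ P : ℕ → Set (Set S), (∀ n, IsFinPartition (P n)) →
    ∃ x ∈ U, ∀ n, {p ∈ P n | (x ∩ p).Nonempty}.ncard ≤ n + 1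

/-- A rapid ultrafilter. -/
def IsRapid (U : Ultrafilter ℕ) : Prop :=
  ∀ f : ℕ → ℕ, StrictMono f → ∃ x ∈ U, ∀ n, (x ∩ {k | k < f n}).ncard ≤ n

/-- A P-point. -/
def IsPPoint (U : Ultrafilter ℕ) : Prop :=
  ∀ x : ℕ → Set ℕ, (∀ n, x n ∈ U) → ∃ y ∈ U, ∀ n, (y \ x n).Finite

theorem stmt_5 (U : Ultrafilter ℕ) (hU : Filter.cofinite ≤ (U : Filter ℕ))
    (hrapid : IsRapid U) (hP : IsPPoint U) :
    IsLaverUltrafilter U := by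
  refine ⟨hU, fun P hPart => ?_⟩
  have hpn : ∀ n, ∃ q ∈ P n, q ∈ U := by
    intro n
    have huniv : ⋃₀ P n ∈ U := by rw [(hPart n).2.2.1]; exact Filter.univ_mem
    exact (Ultrafilter.finite_sUnion_mem_iff (hPart n).1).mp huniv
  choose p hp1 hp2 using hpn
  obtain ⟨y, hyU, hy2⟩ := hP p hp2
  have hg : ∀ n, ∃ b, ∀ k ∈ y \ p n, k < b := by
    intro n
    obtain ⟨b, hb⟩ := (hy2 n).bddAbove
    exact ⟨b + 1, fun k hk => Nat.lt_succ_of_le (hb hk)⟩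
  choose g hgb using hg
  set f : ℕ → ℕ := fun n => (Finset.range (n + 1)).sup g + n + 1 with hf
  have hfmono : StrictMono f := by
    apply strictMono_nat_of_lt_succ
    intro n
    have : (Finset.range (n + 1)).sup g ≤ (Finset.range (n + 1 + 1)).sup g :=
      Finset.sup_mono (Finset.range_subset_range.mpr (by omega))
    simp only [hf]; omega
  have hgf : ∀ n, g n ≤ f n := by
    intro n
    have : g n ≤ (Finset.range (n + 1)).sup g :=
      Finset.le_sup (Finset.mem_range.mpr (Nat.lt_succ_self n))
    simp only [hf]; omega
  obtain ⟨x, hxU, hx⟩ := hrapid f hfmono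
  refine ⟨x ∩ y, Filter.inter_mem hxU hyU, fun n => ?_⟩
  set z := x ∩ y with hz
  set T := {q ∈ P n | (z ∩ q).Nonempty} with hT
  have hTfin : T.Finite := (hPart n).1.subset (fun q hq => hq.1)
  set T' := T \ {p n} with hT'
  have key : T'.ncard ≤ n := by
    have h1 : T'.ncard ≤ (x ∩ {k | k < f n}).ncard := by
      apply Set.ncard_le_ncard_of_injOn (fun q => sInf (z ∩ q))
      · intro q hq
        have hne : (z ∩ q).Nonempty := hq.1.2
        have hmem : sInf (z ∩ q) ∈ z ∩ q := Nat.sInf_mem hne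
        have hqne : q ≠ p n := hq.2
        have hdisj : Disjoint q (p n) := (hPart n).2.2.2 hq.1.1 (hp1 n) hqne
        have hnp : sInf (z ∩ q) ∉ p n := fun h =>
          (Set.disjoint_left.mp hdisj hmem.2) h
        exact ⟨hmem.1.1, lt_of_lt_of_le (hgb n _ ⟨hmem.1.2, hnp⟩) (hgf n)⟩
      · intro q hq q' hq' heq
        have h1 : sInf (z ∩ q) ∈ q := (Nat.sInf_mem hq.1.2).2
        have h2 : sInf (z ∩ q') ∈ q' := (Nat.sInf_mem hq'.1.2).2
        have heq' : sInf (z ∩ q) = sInf (z ∩ q') := heq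
        by_contra hne
        exact Set.disjoint_left.mp ((hPart n).2.2.2 hq.1.1 hq'.1.1 hne) h1 (heq' ▸ h2)
    exact le_trans h1 (hx n)
  have hsub : T ⊆ insert (p n) T' := by
    intro q hq
    by_cases hqp : q = p n
    · exact Or.inl hqp
    · exact Or.inr ⟨hq, hqp⟩
  calc T.ncard ≤ (insert (p n) T').ncard :=
        Set.ncard_le_ncard hsub ((hTfin.diff).insert _)
    _ ≤ T'.ncard + 1 := Set.ncard_insert_le _ _
    _ ≤ n + 1 := by omega
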